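/- Let $A$ be an $n \times n$ real normal matrix (i.e. $A A^T = A^T A$) and $N$ a real matrix such that $A$ lies in the closure of the conjugation orbit $\{g(A+N)g^{-1} : g \in GL_n(\mathbb{R})\}$. Then for every $g \in GL_n(\mathbb{R})$, $\|g(A+N)g^{-1}\| \ge \|A\|$, where $\|\cdot\|$ is the Frobenius norm. -/

import Mathlib

open Matrix

open Polynomial Complex



variable {m : ℕ}

lemma myEvalCharpoly {R : Type*} [CommRing R] (M : Matrix (Fin m) (Fin m) R) (t : R) :
    (M.charpoly).eval t = (t • (1 : Matrix (Fin m) (Fin m) R) - M).det := by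
  rw [Matrix.charpoly, ← Polynomial.coe_evalRingHom, RingHom.map_det]
  congr 1
  ext i j
  by_cases h : i = j <;>
    simp [h, Matrix.charmatrix_apply, Matrix.one_apply, Matrix.diagonal_apply,
      Matrix.sub_apply, Matrix.smul_apply, Matrix.map_apply, RingHom.mapMatrix_apply]

lemma myCharpolyConj {K : Type*} [Field K] [Infinite K]
    (U V M : Matrix (Fin m) (Fin m) K) (h : U * V = 1) :
    (U * M * V).charpoly = M.charpoly := by
  have h2 : V * U = 1 := mul_eq_one_comm.mp h
  refine Polynomial.funext fun t => ?_
  rw [myEvalCharpoly, myEvalCharpoly]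
  have key : t • (1 : Matrix (Fin m) (Fin m) K) - U * M * V = U * (t • 1 - M) * V := by
    rw [mul_sub, sub_mul]
    congr 1
    rw [mul_smul_comm, smul_mul_assoc, mul_one, h]
  rw [key, Matrix.det_mul, Matrix.det_mul, mul_comm, ← mul_assoc, ← Matrix.det_mul, h2,
    Matrix.det_one, one_mul]


lemma mySchur : ∀ (m : ℕ) (M : Matrix (Fin m) (Fin m) ℂ),
    ∃ U : Matrix (Fin m) (Fin m) ℂ, star U * U = 1 ∧
      (star U * M * U).BlockTriangular id := by
  intro m
  induction m with
  | zero =>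
      exact fun M => ⟨1, by simp, fun i j _ => i.elim0⟩
  | succ n ih =>
      intro M
      -- eigenvalue
      obtain ⟨μ, hμ⟩ : ∃ μ : ℂ, M.charpoly.IsRoot μ := by
        apply Complex.exists_root
        have h1 : M.charpoly.natDegree = n + 1 := by
          simpa using Matrix.charpoly_natDegree_eq_dim M
        have : M.charpoly.natDegree ≠ 0 := by omega
        exact Polynomial.natDegree_pos_iff_degree_pos.mp (Nat.pos_of_ne_zero this)
      have hdet : (μ • (1 : Matrix (Fin (n+1)) (Fin (n+1)) ℂ) - M).det = 0 := by
        rw [← myEvalCharpoly]; exact hμ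
      obtain ⟨v, hv0, hveq⟩ := (Matrix.exists_mulVec_eq_zero_iff).mpr hdet
      have hMv : M *ᵥ v = μ • v := by
        have h1 : μ • v - M *ᵥ v = 0 := by
          rw [← hveq, Matrix.sub_mulVec, Matrix.smul_mulVec, Matrix.one_mulVec]
        linear_combination (norm := module) -h1
      -- unit eigenvector in Euclidean space
      set E := EuclideanSpace ℂ (Fin (n+1))
      set v' : E := (WithLp.equiv 2 _).symm v with hv'
      have hv'0 : v' ≠ 0 := by
        intro h; apply hv0
        have := congrArg WithLp.ofLp h
        simpa [hv', WithLp.equiv] using this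
      set w : E := (‖v'‖ : ℂ)⁻¹ • v' with hw
      have hwnorm : ‖w‖ = 1 := by
        rw [hw, norm_smul]
        simp [norm_ne_zero_iff.mpr hv'0]
        rw [abs_of_nonneg (norm_nonneg _)]
        exact inv_mul_cancel₀ (norm_ne_zero_iff.mpr hv'0)
      -- extend to orthonormal basis
      have hcard : Module.finrank ℂ E = Fintype.card (Fin (n+1)) := by simp [E]
      have horth : Orthonormal ℂ (({0} : Set (Fin (n+1))).restrict (fun _ => w)) := by
        constructor
        · intro i; exact hwnorm
        · intro i j hij
          exact absurd (Subtype.ext (by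
            have h1 := i.2; have h2 := j.2
            simp only [Set.mem_singleton_iff] at h1 h2
            rw [h1, h2])) hij
      obtain ⟨b, hb⟩ := horth.exists_orthonormalBasis_extension_of_card_eq hcard
      have hb0 : b 0 = w := hb 0 rfl
      -- column matrix of the basis
      set U₁ : Matrix (Fin (n+1)) (Fin (n+1)) ℂ := Matrix.of (fun i j => b j i) with hU₁def
      have key : ∀ a c : Fin (n+1), (∑ k, star (b a k) * (b c k)) = (if a = c then (1:ℂ) else 0) := by
        intro a c
        have h := orthonormal_iff_ite.mp b.orthonormal a c
        rw [PiLp.inner_apply] at h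
        simpa [RCLike.inner_apply', RCLike.star_def, mul_comm] using h
      have hU₁ : star U₁ * U₁ = 1 := by
        ext a c
        rw [Matrix.mul_apply, Matrix.one_apply]
        simpa [Matrix.star_apply, hU₁def] using key a c
      set T₁ := star U₁ * M * U₁ with hT₁
      have hMw : ∀ k, (∑ l, M k l * w l) = μ * w k := by
        intro k
        have h1 : (M *ᵥ v) k = (μ • v) k := by rw [hMv]
        have h3 : ∑ l, M k l * v l = μ * v k := by
          simpa [Matrix.mulVec, dotProduct, Pi.smul_apply, smul_eq_mul] using h1
        have h2 : ∀ l, w l = (‖v'‖:ℂ)⁻¹ * v l := fun l => rfl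
        calc ∑ l, M k l * w l = ∑ l, (‖v'‖:ℂ)⁻¹ * (M k l * v l) := by
              refine Finset.sum_congr rfl fun l _ => by rw [h2]; ring
          _ = (‖v'‖:ℂ)⁻¹ * ∑ l, M k l * v l := by rw [Finset.mul_sum]
          _ = μ * w k := by rw [h3, h2]; ring
      have hcol : ∀ i : Fin (n+1), i ≠ 0 → T₁ i 0 = 0 := by
        intro i hi
        have e2 : ∀ k, (M * U₁) k 0 = μ * w k := by
          intro k
          rw [Matrix.mul_apply]
          simp only [hU₁def, Matrix.of_apply, hb0]
          exact hMw k
        calc T₁ i 0 = ∑ k, star (b i k) * ((M * U₁) k 0) := by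
              rw [hT₁, mul_assoc, Matrix.mul_apply]
              refine Finset.sum_congr rfl fun k _ => by
                simp [Matrix.star_apply, hU₁def]
          _ = μ * ∑ k, star (b i k) * (b 0 k) := by
              rw [Finset.mul_sum]
              refine Finset.sum_congr rfl fun k _ => by
                rw [e2 k]
                have : (b 0 : E) k = w k := by rw [hb0]
                rw [this]; ring
          _ = 0 := by rw [key i 0, if_neg hi, mul_zero]
      -- induction on the lower-right block
      obtain ⟨W, hW, hWT⟩ := ih (Matrix.of fun i j => T₁ i.succ j.succ)
      set V : Matrix (Fin (n+1)) (Fin (n+1)) ℂ :=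
        Matrix.of (Fin.cons (Fin.cons 1 (fun _ => 0)) (fun i' => Fin.cons 0 (fun j' => W i' j'))) with hV
      have hV00 : V 0 0 = 1 := rfl
      have hV0s : ∀ j : Fin n, V 0 j.succ = 0 := fun j => by simp [hV]
      have hVs0 : ∀ i : Fin n, V i.succ 0 = 0 := fun i => by simp [hV]
      have hVss : ∀ i j : Fin n, V i.succ j.succ = W i j := fun i j => by simp [hV]
      have hWkey : ∀ a c, (∑ k, star (W k a) * W k c) = (if a = c then (1:ℂ) else 0) := by
        intro a c
        have h : (star W * W) a c = (1 : Matrix (Fin n) (Fin n) ℂ) a c := by rw [hW]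
        simpa [Matrix.mul_apply, Matrix.star_apply, Matrix.one_apply] using h
      have hVV : star V * V = 1 := by
        ext a c
        rw [Matrix.mul_apply, Matrix.one_apply, Fin.sum_univ_succ]
        rcases Fin.eq_zero_or_eq_succ a with rfl | ⟨a', rfl⟩ <;>
          rcases Fin.eq_zero_or_eq_succ c with rfl | ⟨c', rfl⟩
        · simp [Matrix.star_apply, hV00, hVs0]
        · simp [Matrix.star_apply, hV00, hV0s, hVs0, (Fin.succ_ne_zero c').symm]
        · simp [Matrix.star_apply, hV00, hV0s, hVs0, Fin.succ_ne_zero a']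
        · simp only [Matrix.star_apply, hV0s, hVss, star_zero, zero_mul, zero_add]
          rw [hWkey a' c']
          simp [Fin.succ_inj]
      have hrow : ∀ (i' : Fin n) (l : Fin (n+1)),
          (star V * T₁) i'.succ l = ∑ k, star (W k i') * T₁ k.succ l := by
        intro i' l
        rw [Matrix.mul_apply, Fin.sum_univ_succ]
        simp [Matrix.star_apply, hV0s, hVss]
      have hMain : (star V * T₁ * V).BlockTriangular id := by
        intro i j hij
        rcases Fin.eq_zero_or_eq_succ i with rfl | ⟨i', rfl⟩
        · exact absurd hij (by simp)
        rcases Fin.eq_zero_or_eq_succ j with rfl | ⟨j', rfl⟩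
        · calc (star V * T₁ * V) i'.succ 0
              = ∑ l, (star V * T₁) i'.succ l * V l 0 := Matrix.mul_apply
            _ = (star V * T₁) i'.succ 0 * 1 := by
                rw [Fin.sum_univ_succ, hV00]
                simp [hVs0]
            _ = 0 := by
                rw [mul_one, hrow]
                exact Finset.sum_eq_zero fun k _ => by
                  rw [hcol k.succ (Fin.succ_ne_zero k), mul_zero]
        · have hji : j' < i' := by
            have : j'.succ < i'.succ := hij
            exact Fin.succ_lt_succ_iff.mp this
          have hz := hWT (show (id j' : Fin n) < id i' from hji)
          rw [Matrix.mul_apply] at hz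
          have hz2 : ∑ l', (∑ k, star (W k i') * T₁ k.succ l'.succ) * W l' j' = 0 := by
            rw [← hz]
            simp only [Matrix.mul_apply, Matrix.star_apply, Matrix.of_apply]
          calc (star V * T₁ * V) i'.succ j'.succ
              = ∑ l, (star V * T₁) i'.succ l * V l j'.succ := Matrix.mul_apply
            _ = ∑ l', (star V * T₁) i'.succ l'.succ * W l' j' := by
                rw [Fin.sum_univ_succ, hV0s]
                simp [hVss]
            _ = ∑ l', (∑ k, star (W k i') * T₁ k.succ l'.succ) * W l' j' := by
                refine Finset.sum_congr rfl fun l' _ => by rw [hrow]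
            _ = 0 := hz2
      refine ⟨U₁ * V, ?_, ?_⟩
      · have h : star (U₁ * V) * (U₁ * V) = star V * ((star U₁ * U₁) * V) := by
          rw [Matrix.star_mul, mul_assoc, ← mul_assoc (star U₁)]
        rw [h, hU₁, one_mul, hVV]
      · have h : star (U₁ * V) * M * (U₁ * V) = star V * T₁ * V := by
          rw [Matrix.star_mul, hT₁]
          simp only [mul_assoc]
        rw [h]
        exact hMain
lemma triOffdiag {m : ℕ} (T : Matrix (Fin m) (Fin m) ℂ)
    (ht : T.BlockTriangular id) (hn : T * star T = star T * T) :
    ∀ i j : Fin m, i ≠ j → T i j = 0 := by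
  have main : ∀ K : ℕ, ∀ i : Fin m, (i : ℕ) < K → ∀ j, i < j → T i j = 0 := by
    intro K
    induction K with
    | zero => exact fun i hi => absurd hi (by omega)
    | succ K ihK =>
      intro i hi j hij
      by_cases hK : (i:ℕ) < K
      · exact ihK i hK j hij
      · have hiK : (i:ℕ) = K := by omega
        have h1 : (T * star T) i i = (star T * T) i i := by rw [hn]
        rw [Matrix.mul_apply, Matrix.mul_apply] at h1
        have h1' : ∑ k, (Complex.normSq (T i k) : ℂ) = ∑ k, (Complex.normSq (T k i) : ℂ) := by
          calc ∑ k, (Complex.normSq (T i k):ℂ) = ∑ k, T i k * (star T) k i := by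
                refine Finset.sum_congr rfl fun k _ => ?_
                rw [Matrix.star_apply]
                exact (Complex.mul_conj _).symm
            _ = ∑ k, (star T) i k * T k i := h1
            _ = ∑ k, (Complex.normSq (T k i):ℂ) := by
                refine Finset.sum_congr rfl fun k _ => ?_
                rw [Matrix.star_apply, mul_comm]
                exact Complex.mul_conj _
        have h2 : ∑ k, Complex.normSq (T i k) = ∑ k, Complex.normSq (T k i) := by
          exact_mod_cast h1'
        have hR : ∑ k, Complex.normSq (T k i) = Complex.normSq (T i i) := by
          refine Finset.sum_eq_single_of_mem i (Finset.mem_univ i) fun k _ hki => ?_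
          rcases lt_or_gt_of_ne hki with hk | hk
          · rw [ihK k (by omega) i hk, Complex.normSq_zero]
          · rw [ht hk, Complex.normSq_zero]
        have hsplit : Complex.normSq (T i i) + ∑ k ∈ Finset.univ.erase i, Complex.normSq (T i k)
            = ∑ k, Complex.normSq (T i k) :=
          Finset.add_sum_erase Finset.univ (fun k => Complex.normSq (T i k)) (Finset.mem_univ i)
        have hzero : ∑ k ∈ Finset.univ.erase i, Complex.normSq (T i k) = 0 := by
          rw [h2, hR] at hsplit
          linarith
        have hj := (Finset.sum_eq_zero_iff_of_nonneg
          (fun k _ => Complex.normSq_nonneg _)).mp hzero j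
          (Finset.mem_erase.mpr ⟨(ne_of_lt hij).symm, Finset.mem_univ j⟩)
        exact Complex.normSq_eq_zero.mp hj
  intro i j hij
  rcases lt_or_gt_of_ne hij with h | h
  · exact main ((i:ℕ)+1) i (by omega) j h
  · exact ht h

noncomputable def frobSqC {m : ℕ} (M : Matrix (Fin m) (Fin m) ℂ) : ℝ :=
  ∑ i, ∑ j, Complex.normSq (M i j)

lemma frobSqC_eq_trace {m : ℕ} (M : Matrix (Fin m) (Fin m) ℂ) :
    (frobSqC M : ℂ) = Matrix.trace (M * star M) := by
  rw [frobSqC, Matrix.trace]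
  push_cast
  refine Finset.sum_congr rfl fun i _ => ?_
  rw [Matrix.diag_apply, Matrix.mul_apply]
  refine Finset.sum_congr rfl fun j _ => ?_
  rw [Matrix.star_apply]
  exact (Complex.mul_conj _).symm

lemma frobSqC_conj {m : ℕ} (U M : Matrix (Fin m) (Fin m) ℂ) (hU : star U * U = 1) :
    frobSqC (star U * M * U) = frobSqC M := by
  have hU2 : U * star U = 1 := mul_eq_one_comm.mp hU
  have hstar : star (star U * M * U) = star U * star M * U := by
    rw [Matrix.star_mul, Matrix.star_mul, star_star, mul_assoc]
  have h : (star U * M * U) * star (star U * M * U) = star U * (M * star M) * U := by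
    rw [hstar]
    calc (star U * M * U) * (star U * star M * U)
        = star U * M * (U * star U) * star M * U := by simp only [mul_assoc]
      _ = star U * (M * star M) * U := by rw [hU2, mul_one]; simp only [mul_assoc]
  have htr : Matrix.trace ((star U * M * U) * star (star U * M * U))
      = Matrix.trace (M * star M) := by
    rw [h, Matrix.trace_mul_comm, ← mul_assoc, hU2, one_mul]
  have := (frobSqC_eq_trace (star U * M * U)).trans (htr.trans (frobSqC_eq_trace M).symm)
  exact_mod_cast this

open Polynomial in
lemma roots_charpoly_triangular {m : ℕ} (T : Matrix (Fin m) (Fin m) ℂ)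
    (ht : T.BlockTriangular id) :
    T.charpoly.roots = Multiset.map (fun i => T i i) Finset.univ.val := by
  rw [Matrix.charpoly_of_upperTriangular T ht]
  have : ∏ i : Fin m, (X - C (T i i)) =
      ((Multiset.map (fun i => T i i) Finset.univ.val).map (fun a => X - C a)).prod := by
    rw [Multiset.map_map]
    rfl
  rw [this, Polynomial.roots_multiset_prod_X_sub_C]

lemma rootsum_le_frobSqC {m : ℕ} (M : Matrix (Fin m) (Fin m) ℂ) :
    (M.charpoly.roots.map Complex.normSq).sum ≤ frobSqC M := by
  obtain ⟨U, hU, hT⟩ := mySchur m M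
  set T := star U * M * U with hTdef
  have hc : T.charpoly = M.charpoly := myCharpolyConj (star U) U M hU
  have hroots : (M.charpoly.roots.map Complex.normSq).sum = ∑ i, Complex.normSq (T i i) := by
    rw [← hc, roots_charpoly_triangular T hT, Multiset.map_map]
    rfl
  rw [hroots, ← frobSqC_conj U M hU]
  rw [frobSqC]
  refine Finset.sum_le_sum fun i _ => ?_
  exact Finset.single_le_sum (fun j _ => Complex.normSq_nonneg _) (Finset.mem_univ i)

lemma rootsum_eq_frobSqC_of_normal {m : ℕ} (M : Matrix (Fin m) (Fin m) ℂ)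
    (hnorm : M * star M = star M * M) :
    (M.charpoly.roots.map Complex.normSq).sum = frobSqC M := by
  obtain ⟨U, hU, hT⟩ := mySchur m M
  have hU2 : U * star U = 1 := mul_eq_one_comm.mp hU
  set T := star U * M * U with hTdef
  have hc : T.charpoly = M.charpoly := myCharpolyConj (star U) U M hU
  have hstar : star T = star U * star M * U := by
    rw [hTdef, Matrix.star_mul, Matrix.star_mul, star_star, mul_assoc]
  have hTnorm : T * star T = star T * T := by
    rw [hstar, hTdef]
    calc (star U * M * U) * (star U * star M * U)
        = star U * M * (U * star U) * star M * U := by simp only [mul_assoc]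
      _ = star U * (M * star M) * U := by rw [hU2, mul_one]; simp only [mul_assoc]
      _ = star U * (star M * M) * U := by rw [hnorm]
      _ = star U * star M * (U * star U) * M * U := by rw [hU2, mul_one]; simp only [mul_assoc]
      _ = (star U * star M * U) * (star U * M * U) := by simp only [mul_assoc]
  have hoff := triOffdiag T hT hTnorm
  have hroots : (M.charpoly.roots.map Complex.normSq).sum = ∑ i, Complex.normSq (T i i) := by
    rw [← hc, roots_charpoly_triangular T hT, Multiset.map_map]
    rfl
  rw [hroots, ← frobSqC_conj U M hU, frobSqC]
  refine Finset.sum_congr rfl fun i _ => ?_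
  symm
  refine Finset.sum_eq_single_of_mem i (Finset.mem_univ i) fun j _ hji => ?_
  rw [show (star U * M * U) i j = (0:ℂ) from hoff i j (Ne.symm hji), Complex.normSq_zero]
/-- Frobenius norm of a real square matrix. -/
noncomputable def frobNorm {n : ℕ} (A : Matrix (Fin n) (Fin n) ℝ) : ℝ :=
  Real.sqrt (∑ i, ∑ j, A i j ^ 2)

lemma frobSqC_map {n : ℕ} (A : Matrix (Fin n) (Fin n) ℝ) :
    frobSqC (A.map Complex.ofRealHom) = ∑ i, ∑ j, A i j ^ 2 := by
  rw [frobSqC]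
  refine Finset.sum_congr rfl fun i _ => Finset.sum_congr rfl fun j _ => ?_
  rw [Matrix.map_apply]
  simp [Complex.normSq_ofReal, sq]

theorem stmt12 (n : ℕ) (A N : Matrix (Fin n) (Fin n) ℝ)
    (hA : A * Aᵀ = Aᵀ * A)
    (hcl : A ∈ closure {M : Matrix (Fin n) (Fin n) ℝ |
      ∃ g : GL (Fin n) ℝ, M = (g : Matrix (Fin n) (Fin n) ℝ) * (A + N) * (↑g⁻¹ : Matrix (Fin n) (Fin n) ℝ)}) :
    ∀ g : GL (Fin n) ℝ,
      frobNorm A ≤ frobNorm ((g : Matrix (Fin n) (Fin n) ℝ) * (A + N) * (↑g⁻¹ : Matrix (Fin n) (Fin n) ℝ)) := by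
  intro g
  have hGL : ∀ g' : GL (Fin n) ℝ,
      (g' : Matrix (Fin n) (Fin n) ℝ) * (↑g'⁻¹ : Matrix (Fin n) (Fin n) ℝ) = 1 := fun g' =>
    g'.mul_inv
  -- Step 1 : A and A + N have the same characteristic polynomial
  have hchar : A.charpoly = (A + N).charpoly := by
    refine Polynomial.funext fun t => ?_
    rw [myEvalCharpoly, myEvalCharpoly]
    have hcont : Continuous fun M : Matrix (Fin n) (Fin n) ℝ => (t • 1 - M).det :=
      (continuous_const.sub continuous_id).matrix_det
    have hsub : {M : Matrix (Fin n) (Fin n) ℝ |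
        ∃ g' : GL (Fin n) ℝ, M = (g' : Matrix (Fin n) (Fin n) ℝ) * (A + N) * (↑g'⁻¹ : Matrix (Fin n) (Fin n) ℝ)} ⊆
        (fun M => (t • 1 - M).det) ⁻¹' {(t • (1 : Matrix (Fin n) (Fin n) ℝ) - (A + N)).det} := by
      rintro M ⟨g', rfl⟩
      simp only [Set.mem_preimage, Set.mem_singleton_iff]
      have h1 := myCharpolyConj (↑g' : Matrix (Fin n) (Fin n) ℝ) ↑g'⁻¹ (A + N) (hGL g')
      calc (t • (1 : Matrix (Fin n) (Fin n) ℝ) - (↑g' : Matrix (Fin n) (Fin n) ℝ) * (A + N) * (↑g'⁻¹ : Matrix (Fin n) (Fin n) ℝ)).det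
          = (((↑g' : Matrix (Fin n) (Fin n) ℝ) * (A + N) * (↑g'⁻¹ : Matrix (Fin n) (Fin n) ℝ)).charpoly).eval t :=
            (myEvalCharpoly _ t).symm
        _ = ((A + N).charpoly).eval t := by rw [h1]
        _ = (t • (1 : Matrix (Fin n) (Fin n) ℝ) - (A + N)).det := myEvalCharpoly _ t
    have hmem := closure_minimal hsub (IsClosed.preimage hcont isClosed_singleton) hcl
    exact hmem
  -- complexify
  set M : Matrix (Fin n) (Fin n) ℝ :=
    (g : Matrix (Fin n) (Fin n) ℝ) * (A + N) * (↑g⁻¹ : Matrix (Fin n) (Fin n) ℝ) with hM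
  set Ac : Matrix (Fin n) (Fin n) ℂ := A.map Complex.ofRealHom with hAc
  set Mc : Matrix (Fin n) (Fin n) ℂ := M.map Complex.ofRealHom with hMc
  have hcharM : M.charpoly = A.charpoly := by
    rw [hM, myCharpolyConj (↑g : Matrix (Fin n) (Fin n) ℝ) ↑g⁻¹ (A + N) (hGL g), hchar]
  have hcharC : Mc.charpoly = Ac.charpoly := by
    rw [hMc, hAc, Matrix.charpoly_map, Matrix.charpoly_map, hcharM]
  -- Ac is normal
  have hstarAc : star Ac = (Aᵀ).map Complex.ofRealHom := by
    ext i j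
    simp [hAc, Matrix.star_apply, Matrix.map_apply, Complex.conj_ofReal]
  have hAcnorm : Ac * star Ac = star Ac * Ac := by
    rw [hstarAc, hAc, ← Matrix.map_mul, ← Matrix.map_mul, hA]
  -- chain of (in)equalities
  have h1 : frobSqC Ac = (Ac.charpoly.roots.map Complex.normSq).sum :=
    (rootsum_eq_frobSqC_of_normal Ac hAcnorm).symm
  have h2 : (Mc.charpoly.roots.map Complex.normSq).sum ≤ frobSqC Mc :=
    rootsum_le_frobSqC Mc
  have hle : frobSqC Ac ≤ frobSqC Mc := by
    rw [h1, ← hcharC]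
    exact h2
  rw [frobNorm, frobNorm]
  apply Real.sqrt_le_sqrt
  rw [← frobSqC_map A, ← frobSqC_map M]
  exact hle
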